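/- Let G be a locally compact Hausdorff group, let α = ({D_t}_{t∈G}, {α_t}_{t∈G}) be a partial action of G on a C*-algebra A, and suppose β and γ are continuous actions of G on C*-algebras B and C, respectively, together with injective *-homomorphisms ι_B : A → B and ι_C : A → C whose ranges are closed two-sided ideals, such that for every t ∈ G: ι_B(D_t) = ι_B(A) ∩ β_t(ι_B(A)), ι_C(D_t) = ι_C(A) ∩ γ_t(ι_C(A)), and β_t(ι_B(a)) = ι_B(α_t(a)), γ_t(ι_C(a)) = ι_C(α_t(a)) for all a ∈ D_{t⁻¹}. Then for every t ∈ G and all a, b ∈ A, the products β_t(ι_B(a))·ι_B(b) and γ_t(ι_C(a))·ι_C(b) lie in ι_B(D_t) and ι_C(D_t) respectively, and they correspond to the same element of A: there exists d ∈ D_t with ι_B(d) = β_t(ι_B(a))·ι_B(b) and ι_C(d) = γ_t(ι_C(a))·ι_C(b). -/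

import Mathlib

/-- A partial action of a topological group `G` on a (not necessarily unital) C*-algebra
`A`: a family of closed two-sided ideals `dom t` together with maps `act t` restricting
to *-isomorphisms `dom t⁻¹ → dom t`, such that `dom 1 = A`, `act 1 = id`,
`act (s * t)` extends `act s ∘ act t`, the family of ideals is continuous (every open
set hits an open set of indices), and `(t, x) ↦ act t x` is continuous. -/
structure CStarPartialAction (G A : Type*) [Group G] [TopologicalSpace G]
    [NonUnitalNormedRing A] [StarRing A] [NormedSpace ℂ A] where
  dom : G → Set A
  act : G → A → A
  isClosed_dom : ∀ t, IsClosed (dom t)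
  zero_mem : ∀ t, (0 : A) ∈ dom t
  add_mem : ∀ t, ∀ x ∈ dom t, ∀ y ∈ dom t, x + y ∈ dom t
  smul_mem : ∀ t (c : ℂ), ∀ x ∈ dom t, c • x ∈ dom t
  mul_mem_left : ∀ t (a : A), ∀ x ∈ dom t, a * x ∈ dom t
  mul_mem_right : ∀ t (a : A), ∀ x ∈ dom t, x * a ∈ dom t
  bijOn : ∀ t, Set.BijOn (act t) (dom t⁻¹) (dom t)
  act_add : ∀ t, ∀ x ∈ dom t⁻¹, ∀ y ∈ dom t⁻¹, act t (x + y) = act t x + act t y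
  act_smul : ∀ t (c : ℂ), ∀ x ∈ dom t⁻¹, act t (c • x) = c • act t x
  act_mul : ∀ t, ∀ x ∈ dom t⁻¹, ∀ y ∈ dom t⁻¹, act t (x * y) = act t x * act t y
  act_star : ∀ t, ∀ x ∈ dom t⁻¹, act t (star x) = star (act t x)
  dom_one : dom 1 = Set.univ
  act_one : ∀ x, act 1 x = x
  act_comp : ∀ s t x, x ∈ dom t⁻¹ → act t x ∈ dom s⁻¹ →
    x ∈ dom (s * t)⁻¹ ∧ act (s * t) x = act s (act t x)
  isOpen_hit : ∀ U : Set A, IsOpen U → IsOpen {t : G | (U ∩ dom t).Nonempty}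
  continuousOn : ContinuousOn (fun p : G × A => act p.1 p.2) {p : G × A | p.2 ∈ dom p.1⁻¹}

/-- A continuous (global) action of a topological group `G` on a C*-algebra `B` by
*-automorphisms: each `β t` is a *-homomorphism, `β 1 = id`, `β s ∘ β t = β (s * t)`
(so each `β t` is bijective), and `t ↦ β t b` is continuous for every `b`. -/
def IsContCStarAction (G B : Type*) [Group G] [TopologicalSpace G]
    [NonUnitalNormedRing B] [StarRing B] [NormedSpace ℂ B] (β : G → B → B) : Prop :=
  (∀ t (x y : B), β t (x + y) = β t x + β t y) ∧
  (∀ t (c : ℂ) (x : B), β t (c • x) = c • β t x) ∧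
  (∀ t (x y : B), β t (x * y) = β t x * β t y) ∧
  (∀ t (x : B), β t (star x) = star (β t x)) ∧
  (∀ x : B, β 1 x = x) ∧
  (∀ s t (x : B), β s (β t x) = β (s * t) x) ∧
  (∀ x : B, Continuous fun t => β t x)

variable {G : Type*} [Group G] [TopologicalSpace G] [IsTopologicalGroup G]
  [LocallyCompactSpace G] [T2Space G]
variable {A : Type*} [NonUnitalNormedRing A] [StarRing A] [CStarRing A]
  [NormedSpace ℂ A] [IsScalarTower ℂ A A] [SMulCommClass ℂ A A]
  [StarModule ℂ A] [CompleteSpace A]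
variable {B : Type*} [NonUnitalNormedRing B] [StarRing B] [CStarRing B]
  [NormedSpace ℂ B] [IsScalarTower ℂ B B] [SMulCommClass ℂ B B]
  [StarModule ℂ B] [CompleteSpace B]
variable {C : Type*} [NonUnitalNormedRing C] [StarRing C] [CStarRing C]
  [NormedSpace ℂ C] [IsScalarTower ℂ C C] [SMulCommClass ℂ C C]
  [StarModule ℂ C] [CompleteSpace C]

/-- If `(β, B, ι_B)` and `(γ, C, ι_C)` are two enveloping actions of a partial action
`α` of `G` on `A` (realizing `A` as a closed two-sided ideal on which the global action
restricts to `α`), then for every `t ∈ G` and `a b ∈ A` the products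
`β_t(ι_B a) · ι_B b` and `γ_t(ι_C a) · ι_C b` lie in `ι_B(D_t)`, `ι_C(D_t)` respectively
and correspond to the same element `d ∈ D_t` of `A`. -/
theorem CStarPartialAction.envelope_products_agree
    (α : CStarPartialAction G A)
    (β : G → B → B) (hβ : IsContCStarAction G B β)
    (γ : G → C → C) (hγ : IsContCStarAction G C γ)
    (ιB : A →⋆ₙₐ[ℂ] B) (ιC : A →⋆ₙₐ[ℂ] C)
    (hιB_inj : Function.Injective ιB) (hιC_inj : Function.Injective ιC)
    (hιB_closed : IsClosed (Set.range ιB)) (hιC_closed : IsClosed (Set.range ιC))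
    (hιB_left : ∀ b : B, ∀ x ∈ Set.range ιB, b * x ∈ Set.range ιB)
    (hιB_right : ∀ b : B, ∀ x ∈ Set.range ιB, x * b ∈ Set.range ιB)
    (hιC_left : ∀ c : C, ∀ x ∈ Set.range ιC, c * x ∈ Set.range ιC)
    (hιC_right : ∀ c : C, ∀ x ∈ Set.range ιC, x * c ∈ Set.range ιC)
    (hB_dom : ∀ t, ιB '' α.dom t = Set.range ιB ∩ (β t '' Set.range ιB))
    (hC_dom : ∀ t, ιC '' α.dom t = Set.range ιC ∩ (γ t '' Set.range ιC))
    (hB_res : ∀ t, ∀ a ∈ α.dom t⁻¹, β t (ιB a) = ιB (α.act t a))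
    (hC_res : ∀ t, ∀ a ∈ α.dom t⁻¹, γ t (ιC a) = ιC (α.act t a)) :
    ∀ (t : G) (a b : A), ∃ d ∈ α.dom t,
      ιB d = β t (ιB a) * ιB b ∧ ιC d = γ t (ιC a) * ιC b :=  by
  obtain ⟨hβadd, hβsmul, hβmul, hβstar, hβone, hβcomp, hβcont⟩ := hβ
  obtain ⟨hγadd, hγsmul, hγmul, hγstar, hγone, hγcomp, hγcont⟩ := hγ
  intro t a b
  have hβinvβ : ∀ w : B, β t (β t⁻¹ w) = w := fun w => by
    rw [hβcomp, mul_inv_cancel, hβone]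
  have hγinvγ : ∀ w : C, γ t (γ t⁻¹ w) = w := fun w => by
    rw [hγcomp, mul_inv_cancel, hγone]
  -- the B-side product lies in ιB '' dom t
  have hPB : β t (ιB a) * ιB b ∈ ιB '' α.dom t := by
    rw [hB_dom]
    constructor
    · exact hιB_left _ _ ⟨b, rfl⟩
    · refine ⟨ιB a * β t⁻¹ (ιB b), hιB_right _ _ ⟨a, rfl⟩, ?_⟩
      rw [hβmul, hβinvβ]
  have hPC : γ t (ιC a) * ιC b ∈ ιC '' α.dom t := by
    rw [hC_dom]
    constructor
    · exact hιC_left _ _ ⟨b, rfl⟩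
    · refine ⟨ιC a * γ t⁻¹ (ιC b), hιC_right _ _ ⟨a, rfl⟩, ?_⟩
      rw [hγmul, hγinvγ]
  obtain ⟨dB, hdB, hdBe⟩ := hPB
  obtain ⟨dC, hdC, hdCe⟩ := hPC
  -- key: for e ∈ dom t⁻¹, act t e * dB = act t (e * a) * b, same for dC
  have keyB : ∀ e ∈ α.dom t⁻¹, α.act t e * dB = α.act t (e * a) * b := by
    intro e he
    have hea : e * a ∈ α.dom t⁻¹ := α.mul_mem_right _ a e he
    apply hιB_inj
    have : ιB (α.act t e * dB) = β t (ιB e) * (β t (ιB a) * ιB b) := by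
      rw [map_mul, hdBe, hB_res t e he]
    rw [this, map_mul, ← hB_res t _ hea, map_mul, ← mul_assoc, ← hβmul]
  have keyC : ∀ e ∈ α.dom t⁻¹, α.act t e * dC = α.act t (e * a) * b := by
    intro e he
    have hea : e * a ∈ α.dom t⁻¹ := α.mul_mem_right _ a e he
    apply hιC_inj
    have : ιC (α.act t e * dC) = γ t (ιC e) * (γ t (ιC a) * ιC b) := by
      rw [map_mul, hdCe, hC_res t e he]
    rw [this, map_mul, ← hC_res t _ hea, map_mul, ← mul_assoc, ← hγmul]
  have keyf : ∀ f ∈ α.dom t, f * dB = f * dC := by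
    intro f hf
    obtain ⟨e, he, rfl⟩ := (α.bijOn t).surjOn hf
    rw [keyB e he, keyC e he]
  -- z := dB - dC is zero
  set z := dB - dC with hz
  have hzmem : z ∈ α.dom t := by
    have : z = dB + (-1 : ℂ) • dC := by
      rw [neg_one_smul, ← sub_eq_add_neg]
    rw [this]
    exact α.add_mem t dB hdB _ (α.smul_mem t (-1) dC hdC)
  have hfz : ∀ f ∈ α.dom t, f * z = 0 := by
    intro f hf
    rw [hz, mul_sub, keyf f hf, sub_self]
  have hzz : (z * star z) * z = 0 :=
    hfz _ (α.mul_mem_right t (star z) z hzmem)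
  have hw : star z * z = 0 := by
    have h1 : (star z * z) * (star z * z) = 0 := by
      calc (star z * z) * (star z * z) = star z * ((z * star z) * z) := by
            simp only [mul_assoc]
        _ = 0 := by rw [hzz, mul_zero]
    have h2 : ‖star z * z‖ * ‖star z * z‖ = 0 := by
      have hsa : star (star z * z) = star z * z := by
        simp [star_mul]
      calc ‖star z * z‖ * ‖star z * z‖ = ‖star (star z * z) * (star z * z)‖ :=
            (CStarRing.norm_star_mul_self).symm
        _ = 0 := by rw [hsa, h1, norm_zero]
    have := mul_self_eq_zero.mp h2
    exact norm_eq_zero.mp this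
  have hz0 : z = 0 := by
    have : ‖z‖ * ‖z‖ = 0 := by rw [← CStarRing.norm_star_mul_self, hw, norm_zero]
    exact norm_eq_zero.mp (mul_self_eq_zero.mp this)
  have hdd : dB = dC := by
    have := sub_eq_zero.mp hz0
    exact this
  exact ⟨dB, hdB, hdBe, by rw [hdd, hdCe]⟩
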